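/- Let Q be a key polynomial with ε := ε(Q). For every f ∈ K[x] with deg(f) < deg(Q) and every b ∈ ℕ, ν_Q(∂_b(f Q^n)) ≥ ν(f Q^n) - bε. -/

import Mathlib

open Polynomial
open scoped Classical
noncomputable section

/-- `ν` is (the restriction to nonzero polynomials of) a valuation on `K[x]`,
nontrivial on `K`, with `ν(x) ≥ 0`.  Values are taken in a linearly ordered
field `Γ` (playing the role of the divisible hull of the value group). -/
structure IsVal {K : Type*} [Field K] {Γ : Type*} [Field Γ] [LinearOrder Γ] [IsStrictOrderedRing Γ]
    (ν : Polynomial K → Γ) : Prop where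
  map_mul : ∀ f g : Polynomial K, f ≠ 0 → g ≠ 0 → ν (f * g) = ν f + ν g
  map_add : ∀ f g : Polynomial K, f ≠ 0 → g ≠ 0 → f + g ≠ 0 →
    min (ν f) (ν g) ≤ ν (f + g)
  nontrivial : ∃ a : K, a ≠ 0 ∧ ν (C a) ≠ 0
  nonneg_x : 0 ≤ ν X

/-- `ε(f) = max_{b ≥ 1, ∂_b f ≠ 0} (ν(f) - ν(∂_b f))/b`, where `∂_b` is the
`b`-th formal (Hasse) derivative.  (Terms with `∂_b f = 0` correspond to the
value `-∞` and are omitted from the maximum.) -/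
noncomputable def eps {K : Type*} [Field K] {Γ : Type*} [Field Γ] [LinearOrder Γ] [IsStrictOrderedRing Γ]
    (ν : Polynomial K → Γ) (f : Polynomial K) : Γ :=
  if h : ((Finset.Icc 1 f.natDegree).filter
      fun b => Polynomial.hasseDeriv b f ≠ 0).Nonempty then
    ((Finset.Icc 1 f.natDegree).filter
      fun b => Polynomial.hasseDeriv b f ≠ 0).sup' h
      fun b => (ν f - ν (Polynomial.hasseDeriv b f)) / (b : Γ)
  else 0

/-- A monic (nonconstant) polynomial `Q` is a key polynomial for `ν` if every
`f ∈ K[x]` with `ε(f) ≥ ε(Q)` satisfies `deg f ≥ deg Q`. -/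
def IsKeyPol {K : Type*} [Field K] {Γ : Type*} [Field Γ] [LinearOrder Γ] [IsStrictOrderedRing Γ]
    (ν : Polynomial K → Γ) (Q : Polynomial K) : Prop :=
  Q.Monic ∧ 1 ≤ Q.natDegree ∧
    ∀ f : Polynomial K, 1 ≤ f.natDegree → eps ν Q ≤ eps ν f →
      Q.natDegree ≤ f.natDegree

/-- The `i`-th coefficient `f_i` of the `q`-standard expansion
`f = Σ f_i q^i` (each `f_i = 0` or `deg f_i < deg q`), for `q` monic. -/
noncomputable def qCoeff {K : Type*} [Field K] (q f : Polynomial K) (i : ℕ) :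
    Polynomial K :=
  (f /ₘ q ^ i) %ₘ q

/-- The `q`-truncation `ν_q(f) = min_i ν(f_i q^i)` of `ν`, the minimum taken
over the nonzero coefficients of the `q`-standard expansion of `f`. -/
noncomputable def truncVal {K : Type*} [Field K] {Γ : Type*}
    [Field Γ] [LinearOrder Γ] [IsStrictOrderedRing Γ] (ν : Polynomial K → Γ) (q f : Polynomial K) : Γ :=
  if h : ((Finset.range (f.natDegree + 1)).filter
      fun i => qCoeff q f i ≠ 0).Nonempty then
    ((Finset.range (f.natDegree + 1)).filter
      fun i => qCoeff q f i ≠ 0).inf' h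
      fun i => ν (qCoeff q f i * q ^ i)
  else 0

/-- `I(Q) = {b : (ν(Q) - ν(∂_b Q))/b = ε(Q)}`. -/
def Iset {K : Type*} [Field K] {Γ : Type*} [Field Γ] [LinearOrder Γ] [IsStrictOrderedRing Γ]
    (ν : Polynomial K → Γ) (Q : Polynomial K) : Set ℕ :=
  {b | 1 ≤ b ∧ Polynomial.hasseDeriv b Q ≠ 0 ∧
    (ν Q - ν (Polynomial.hasseDeriv b Q)) / (b : Γ) = eps ν Q}

/-- `S_Q(f) = {i : ν(f_i Q^i) = ν_Q(f)}` (over nonzero coefficients). -/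
def Sset {K : Type*} [Field K] {Γ : Type*} [Field Γ] [LinearOrder Γ] [IsStrictOrderedRing Γ]
    (ν : Polynomial K → Γ) (q f : Polynomial K) : Set ℕ :=
  {i | qCoeff q f i ≠ 0 ∧ ν (qCoeff q f i * q ^ i) = truncVal ν q f}


variable {K : Type*} [Field K] {Γ : Type*} [Field Γ] [LinearOrder Γ] [IsStrictOrderedRing Γ]
variable {ν : Polynomial K → Γ}

private lemma v_one (hν : IsVal ν) : ν 1 = 0 := by
  have h := hν.map_mul 1 1 one_ne_zero one_ne_zero
  rw [mul_one] at h; linarith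

private lemma v_neg (hν : IsVal ν) {g : Polynomial K} (hg : g ≠ 0) : ν (-g) = ν g := by
  have h1 : ν ((-1 : Polynomial K) * (-1)) = ν (-1 : Polynomial K) + ν (-1 : Polynomial K) :=
    hν.map_mul _ _ (by norm_num) (by norm_num)
  rw [neg_mul_neg, one_mul] at h1
  have h0 : ν (-1 : Polynomial K) = 0 := by have := v_one hν; linarith
  have h2 : ν ((-1 : Polynomial K) * g) = ν (-1 : Polynomial K) + ν g :=
    hν.map_mul _ _ (by norm_num) hg
  rw [neg_one_mul] at h2
  rw [h2, h0, zero_add]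

private lemma v_add_left (hν : IsVal ν) {x y : Polynomial K} (hx : x ≠ 0)
    (hy : y ≠ 0 → ν x < ν y) : x + y ≠ 0 ∧ ν (x + y) = ν x := by
  by_cases h0 : y = 0
  · subst h0; exact ⟨by simpa using hx, by simp⟩
  have hlt := hy h0
  have hne : x + y ≠ 0 := by
    intro h
    have hyx : y = -x := by linear_combination h
    rw [hyx, v_neg hν hx] at hlt; exact lt_irrefl _ hlt
  refine ⟨hne, ?_⟩
  have h1 : min (ν x) (ν y) ≤ ν (x + y) := hν.map_add _ _ hx h0 hne
  rw [min_eq_left hlt.le] at h1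
  have hxe : (x + y) + -y = x := by ring
  have h2 : min (ν (x + y)) (ν (-y)) ≤ ν x := by
    calc min (ν (x + y)) (ν (-y)) ≤ ν ((x + y) + -y) :=
          hν.map_add _ _ hne (neg_ne_zero.mpr h0) (by rw [hxe]; exact hx)
      _ = ν x := by rw [hxe]
  rw [v_neg hν h0] at h2
  rcases min_le_iff.mp h2 with h | h
  · exact le_antisymm h h1
  · exact absurd (lt_of_lt_of_le hlt h) (lt_irrefl _)

private lemma v_sum_eq (hν : IsVal ν) {ι : Type*} {x : Polynomial K} (hx : x ≠ 0)
    (s : Finset ι) (F : ι → Polynomial K) :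
    (∀ i ∈ s, F i ≠ 0 → ν x < ν (F i)) →
    x + ∑ i ∈ s, F i ≠ 0 ∧ ν (x + ∑ i ∈ s, F i) = ν x := by
  induction s using Finset.induction_on with
  | empty => intro _; exact ⟨by simpa using hx, by simp⟩
  | @insert a s ha ih =>
    intro h
    have ih' := ih (fun i hi hFi => h i (Finset.mem_insert_of_mem hi) hFi)
    have hre : x + ∑ i ∈ insert a s, F i = (x + ∑ i ∈ s, F i) + F a := by
      rw [Finset.sum_insert ha]; ring
    rw [hre]
    have hres := v_add_left (y := F a) hν ih'.1
      (fun hFa => by rw [ih'.2]; exact h a (Finset.mem_insert_self a s) hFa)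
    exact ⟨hres.1, hres.2.trans ih'.2⟩

private lemma v_sum_ge (hν : IsVal ν) {ι : Type*} {c : Γ} (s : Finset ι)
    (F : ι → Polynomial K) :
    (∀ i ∈ s, F i ≠ 0 → c ≤ ν (F i)) → (∑ i ∈ s, F i) ≠ 0 →
    c ≤ ν (∑ i ∈ s, F i) := by
  induction s using Finset.induction_on with
  | empty => intro _ hs; simp at hs
  | @insert a s ha ih =>
    intro h hs
    rw [Finset.sum_insert ha] at hs ⊢
    by_cases hFa : F a = 0
    · rw [hFa, zero_add] at hs ⊢
      exact ih (fun i hi => h i (Finset.mem_insert_of_mem hi)) hs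
    by_cases hS : ∑ i ∈ s, F i = 0
    · rw [hS, add_zero] at hs ⊢
      exact h a (Finset.mem_insert_self a s) hFa
    calc c ≤ min (ν (F a)) (ν (∑ i ∈ s, F i)) :=
          le_min (h a (Finset.mem_insert_self a s) hFa)
            (ih (fun i hi => h i (Finset.mem_insert_of_mem hi)) hS)
      _ ≤ ν (F a + ∑ i ∈ s, F i) := hν.map_add _ _ hFa hS hs

private lemma v_pow (hν : IsVal ν) {q : Polynomial K} (hq : q ≠ 0) (k : ℕ) :
    ν (q ^ k) = (k : Γ) * ν q := by
  induction k with
  | zero => simpa using v_one hν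
  | succ k ih =>
    rw [pow_succ, hν.map_mul _ _ (pow_ne_zero _ hq) hq, ih]
    push_cast; ring

private lemma hasse_le {g : Polynomial K} {b : ℕ} (h : Polynomial.hasseDeriv b g ≠ 0) :
    b ≤ g.natDegree := by
  by_contra hb
  exact h (Polynomial.hasseDeriv_eq_zero_of_lt_natDegree g b (not_le.mp hb))

private lemma deriv_ge (hν : IsVal ν) {g : Polynomial K} {b : ℕ}
    (h : Polynomial.hasseDeriv b g ≠ 0) :
    ν g - (b : Γ) * eps ν g ≤ ν (Polynomial.hasseDeriv b g) := by
  rcases Nat.eq_zero_or_pos b with hb | hb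
  · subst hb; simp [Polynomial.hasseDeriv_zero']
  · have hmem : b ∈ (Finset.Icc 1 g.natDegree).filter
        (fun b => Polynomial.hasseDeriv b g ≠ 0) := by
      simp only [Finset.mem_filter, Finset.mem_Icc]
      exact ⟨⟨hb, hasse_le h⟩, h⟩
    have hne : ((Finset.Icc 1 g.natDegree).filter
        fun b => Polynomial.hasseDeriv b g ≠ 0).Nonempty := ⟨b, hmem⟩
    have hsup : (ν g - ν (Polynomial.hasseDeriv b g)) / (b : Γ) ≤ eps ν g := by
      rw [eps, dif_pos hne]
      exact Finset.le_sup' (fun b => (ν g - ν (Polynomial.hasseDeriv b g)) / (b : Γ)) hmem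
    have hb0 : (0 : Γ) < (b : Γ) := by exact_mod_cast hb
    rw [div_le_iff₀ hb0, mul_comm] at hsup
    linarith

private lemma eps_exists (hν : IsVal ν) {Q : Polynomial K} (hQm : Q.Monic)
    (hm : 1 ≤ Q.natDegree) :
    ∃ b : ℕ, 1 ≤ b ∧ Polynomial.hasseDeriv b Q ≠ 0 ∧
      ν (Polynomial.hasseDeriv b Q) = ν Q - (b : Γ) * eps ν Q := by
  have hQd : Polynomial.hasseDeriv Q.natDegree Q ≠ 0 := by
    intro h0
    have hc := congrArg (fun p => Polynomial.coeff p 0) h0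
    simp only [Polynomial.hasseDeriv_coeff, zero_add, Nat.choose_self, one_mul,
      Polynomial.coeff_zero, Nat.cast_one] at hc
    rw [hQm.coeff_natDegree] at hc
    exact one_ne_zero hc
  have hmem : Q.natDegree ∈ (Finset.Icc 1 Q.natDegree).filter
      (fun b => Polynomial.hasseDeriv b Q ≠ 0) := by
    simp only [Finset.mem_filter, Finset.mem_Icc]
    exact ⟨⟨hm, le_refl _⟩, hQd⟩
  have hne : ((Finset.Icc 1 Q.natDegree).filter
      fun b => Polynomial.hasseDeriv b Q ≠ 0).Nonempty := ⟨_, hmem⟩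
  obtain ⟨b, hbmem, hbeq⟩ := Finset.exists_mem_eq_sup' hne
    (fun b => (ν Q - ν (Polynomial.hasseDeriv b Q)) / (b : Γ))
  have hbmem' := hbmem
  simp only [Finset.mem_filter, Finset.mem_Icc] at hbmem'
  refine ⟨b, hbmem'.1.1, hbmem'.2, ?_⟩
  have hb0 : (0 : Γ) < (b : Γ) := by exact_mod_cast hbmem'.1.1
  have heq : eps ν Q = (ν Q - ν (Polynomial.hasseDeriv b Q)) / (b : Γ) := by
    rw [eps, dif_pos hne]; exact hbeq
  rw [heq]
  field_simp
  ring

private lemma key_lt {Q : Polynomial K} (hQ : IsKeyPol ν Q) {u : Polynomial K}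
    (h1 : 1 ≤ u.natDegree) (h2 : u.natDegree < Q.natDegree) : eps ν u < eps ν Q := by
  refine lt_of_not_ge fun hle => ?_
  exact absurd (hQ.2.2 u h1 hle) (by omega)

private lemma small_deriv_lt (hν : IsVal ν) {Q : Polynomial K} (hQ : IsKeyPol ν Q)
    {u : Polynomial K} (hdeg : u.natDegree < Q.natDegree) {i : ℕ} (hi : 1 ≤ i)
    (hne : Polynomial.hasseDeriv i u ≠ 0) :
    ν u - (i : Γ) * eps ν Q < ν (Polynomial.hasseDeriv i u) := by
  have h1 : 1 ≤ u.natDegree := le_trans hi (hasse_le hne)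
  have h2 := key_lt hQ h1 hdeg
  have h3 := deriv_ge hν hne
  have hi0 : (0 : Γ) < (i : Γ) := by exact_mod_cast hi
  have h4 := mul_lt_mul_of_pos_left h2 hi0
  linarith

private lemma small_deriv_le (hν : IsVal ν) {Q : Polynomial K} (hQ : IsKeyPol ν Q)
    {u : Polynomial K} (hdeg : u.natDegree < Q.natDegree) {i : ℕ}
    (hne : Polynomial.hasseDeriv i u ≠ 0) :
    ν u - (i : Γ) * eps ν Q ≤ ν (Polynomial.hasseDeriv i u) := by
  rcases Nat.eq_zero_or_pos i with h | h
  · subst h; simp [Polynomial.hasseDeriv_zero']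
  · exact (small_deriv_lt hν hQ hdeg h hne).le

private lemma add_divByMonic {q : Polynomial K} (hq : q.Monic) (p₁ p₂ : Polynomial K) :
    (p₁ + p₂) /ₘ q = p₁ /ₘ q + p₂ /ₘ q :=
  (Polynomial.div_modByMonic_unique (p₁ /ₘ q + p₂ /ₘ q) (p₁ %ₘ q + p₂ %ₘ q) hq
    ⟨by rw [mul_add, add_add_add_comm, Polynomial.modByMonic_add_div _ q,
        Polynomial.modByMonic_add_div _ q],
      (Polynomial.degree_add_le _ _).trans_lt
        (max_lt (Polynomial.degree_modByMonic_lt _ hq)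
          (Polynomial.degree_modByMonic_lt _ hq))⟩).1

private lemma divByMonic_pow_succ {Q : Polynomial K} (hQm : Q.Monic)
    (f : Polynomial K) (i : ℕ) :
    f /ₘ Q ^ (i + 1) = f /ₘ Q /ₘ Q ^ i := by
  refine (Polynomial.div_modByMonic_unique _ (Q * (f /ₘ Q %ₘ Q ^ i) + f %ₘ Q)
      (hQm.pow (i + 1)) ⟨?_, ?_⟩).1
  · have h1 := Polynomial.modByMonic_add_div (f /ₘ Q) (Q ^ i)
    have h2 := Polynomial.modByMonic_add_div f Q
    calc Q * (f /ₘ Q %ₘ Q ^ i) + f %ₘ Q + Q ^ (i + 1) * (f /ₘ Q /ₘ Q ^ i)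
        = f %ₘ Q + Q * (f /ₘ Q %ₘ Q ^ i + Q ^ i * (f /ₘ Q /ₘ Q ^ i)) := by ring
      _ = f := by rw [h1, h2]
  · refine (Polynomial.degree_add_le _ _).trans_lt (max_lt ?_ ?_)
    · have hd1 : (f /ₘ Q %ₘ Q ^ i).degree < (Q ^ i).degree :=
        Polynomial.degree_modByMonic_lt _ (hQm.pow i)
      calc (Q * (f /ₘ Q %ₘ Q ^ i)).degree ≤ Q.degree + (f /ₘ Q %ₘ Q ^ i).degree :=
            Polynomial.degree_mul_le _ _
        _ < Q.degree + (Q ^ i).degree := by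
            exact WithBot.add_lt_add_left
              (by rw [Ne, Polynomial.degree_eq_bot]; exact hQm.ne_zero) hd1
        _ = (Q ^ (i + 1)).degree := by
            rw [pow_succ', Polynomial.degree_mul]
    · calc (f %ₘ Q).degree < Q.degree := Polynomial.degree_modByMonic_lt _ hQm
        _ ≤ (Q ^ (i + 1)).degree :=
            Polynomial.degree_le_of_dvd (dvd_pow_self Q (Nat.succ_ne_zero i))
              (pow_ne_zero _ hQm.ne_zero)

private lemma qCoeff_zero (Q f : Polynomial K) : qCoeff Q f 0 = f %ₘ Q := by
  rw [qCoeff, pow_zero, Polynomial.divByMonic_one]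

private lemma qCoeff_succ {Q : Polynomial K} (hQm : Q.Monic) (f : Polynomial K) (i : ℕ) :
    qCoeff Q f (i + 1) = qCoeff Q (f /ₘ Q) i := by
  rw [qCoeff, qCoeff, divByMonic_pow_succ hQm]

private lemma qCoeff_add {Q : Polynomial K} (hQm : Q.Monic) (f g : Polynomial K) (i : ℕ) :
    qCoeff Q (f + g) i = qCoeff Q f i + qCoeff Q g i := by
  rw [qCoeff, qCoeff, qCoeff, add_divByMonic (hQm.pow i), Polynomial.add_modByMonic]

private lemma deg_lt_pow {Q : Polynomial K} (hQm : Q.Monic) {f : Polynomial K} {k : ℕ}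
    (hfd : f.natDegree < k * Q.natDegree) : f.degree < (Q ^ k).degree := by
  apply lt_of_le_of_lt Polynomial.degree_le_natDegree
  rw [Polynomial.degree_eq_natDegree (pow_ne_zero _ hQm.ne_zero), hQm.natDegree_pow]
  exact_mod_cast hfd

private lemma qCoeff_ne_imp_le {Q : Polynomial K} (hQm : Q.Monic) (hm : 1 ≤ Q.natDegree)
    {f : Polynomial K} {i : ℕ} (h : qCoeff Q f i ≠ 0) : i ≤ f.natDegree := by
  have hdiv : f /ₘ Q ^ i ≠ 0 := by
    intro h0; apply h; rw [qCoeff, h0, Polynomial.zero_modByMonic]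
  have hdeg : i * Q.natDegree ≤ f.natDegree := by
    by_contra hlt
    exact hdiv ((Polynomial.divByMonic_eq_zero_iff (hQm.pow i)).mpr
      (deg_lt_pow hQm (not_le.mp hlt)))
  have h2 : i ≤ i * Q.natDegree := Nat.le_mul_of_pos_right i (by omega)
  omega

private lemma qCoeff_deg {Q : Polynomial K} (hQm : Q.Monic) {f : Polynomial K} {i : ℕ}
    (h : qCoeff Q f i ≠ 0) : (qCoeff Q f i).natDegree < Q.natDegree := by
  have := Polynomial.degree_modByMonic_lt (f /ₘ Q ^ i) hQm
  exact Polynomial.natDegree_lt_natDegree h this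

private lemma qCoeff_exists {Q : Polynomial K} (hQm : Q.Monic) (hm : 1 ≤ Q.natDegree) :
    ∀ (N : ℕ) (f : Polynomial K), f.natDegree ≤ N → f ≠ 0 → ∃ i, qCoeff Q f i ≠ 0 := by
  intro N
  induction N with
  | zero =>
    intro f hN hf
    refine ⟨0, ?_⟩
    rw [qCoeff_zero, (Polynomial.modByMonic_eq_self_iff hQm).mpr ?_]
    · exact hf
    · calc f.degree ≤ (f.natDegree : WithBot ℕ) := Polynomial.degree_le_natDegree
        _ < Q.degree := by
            rw [Polynomial.degree_eq_natDegree hQm.ne_zero]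
            exact_mod_cast by omega
  | succ N ih =>
    intro f hN hf
    by_cases h0 : f %ₘ Q = 0
    · have hd : f /ₘ Q ≠ 0 := by
        intro hq
        have hh := Polynomial.modByMonic_add_div f Q
        rw [h0, hq, mul_zero, add_zero] at hh
        exact hf hh.symm
      have hdeg : (f /ₘ Q).natDegree ≤ N := by
        rw [Polynomial.natDegree_divByMonic f hQm]; omega
      obtain ⟨i, hi⟩ := ih (f /ₘ Q) hdeg hd
      exact ⟨i + 1, by rwa [qCoeff_succ hQm]⟩
    · exact ⟨0, by rwa [qCoeff_zero]⟩

private lemma truncVal_le {Q : Polynomial K} (hQm : Q.Monic) (hm : 1 ≤ Q.natDegree)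
    {f : Polynomial K} {i : ℕ} (h : qCoeff Q f i ≠ 0) :
    truncVal ν Q f ≤ ν (qCoeff Q f i * Q ^ i) := by
  have hmem : i ∈ (Finset.range (f.natDegree + 1)).filter (fun i => qCoeff Q f i ≠ 0) := by
    simp only [Finset.mem_filter, Finset.mem_range]
    exact ⟨Nat.lt_succ_of_le (qCoeff_ne_imp_le hQm hm h), h⟩
  rw [truncVal, dif_pos ⟨i, hmem⟩]
  exact Finset.inf'_le (fun i => ν (qCoeff Q f i * Q ^ i)) hmem

private lemma truncVal_ge {Q : Polynomial K} (hQm : Q.Monic) (hm : 1 ≤ Q.natDegree)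
    {f : Polynomial K} (hf : f ≠ 0) {c : Γ}
    (h : ∀ i, qCoeff Q f i ≠ 0 → c ≤ ν (qCoeff Q f i * Q ^ i)) :
    c ≤ truncVal ν Q f := by
  obtain ⟨j, hj⟩ := qCoeff_exists hQm hm f.natDegree f le_rfl hf
  have hmem : j ∈ (Finset.range (f.natDegree + 1)).filter (fun i => qCoeff Q f i ≠ 0) := by
    simp only [Finset.mem_filter, Finset.mem_range]
    exact ⟨Nat.lt_succ_of_le (qCoeff_ne_imp_le hQm hm hj), hj⟩
  rw [truncVal, dif_pos ⟨j, hmem⟩]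
  exact Finset.le_inf' _ _ fun i hi => h i (Finset.mem_filter.mp hi).2


private lemma truncVal_add (hν : IsVal ν) {Q : Polynomial K} (hQm : Q.Monic)
    (hm : 1 ≤ Q.natDegree) {f g : Polynomial K}
    (hfg : f + g ≠ 0) :
    min (truncVal ν Q f) (truncVal ν Q g) ≤ truncVal ν Q (f + g) := by
  apply truncVal_ge hQm hm hfg
  intro i hi
  rw [qCoeff_add hQm] at hi ⊢
  by_cases h1 : qCoeff Q f i = 0
  · rw [h1, zero_add] at hi ⊢
    exact le_trans (min_le_right _ _) (truncVal_le hQm hm hi)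
  by_cases h2 : qCoeff Q g i = 0
  · rw [h2, add_zero] at hi ⊢
    exact le_trans (min_le_left _ _) (truncVal_le hQm hm hi)
  have hQp : (Q ^ i : Polynomial K) ≠ 0 := pow_ne_zero _ hQm.ne_zero
  have hre : (qCoeff Q f i + qCoeff Q g i) * Q ^ i
      = qCoeff Q f i * Q ^ i + qCoeff Q g i * Q ^ i := by ring
  rw [hre]
  calc min (truncVal ν Q f) (truncVal ν Q g)
      ≤ min (ν (qCoeff Q f i * Q ^ i)) (ν (qCoeff Q g i * Q ^ i)) :=
        min_le_min (truncVal_le hQm hm h1) (truncVal_le hQm hm h2)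
    _ ≤ ν (qCoeff Q f i * Q ^ i + qCoeff Q g i * Q ^ i) := by
        apply hν.map_add _ _ (mul_ne_zero h1 hQp) (mul_ne_zero h2 hQp)
        rw [← hre]
        exact mul_ne_zero hi hQp

private lemma truncVal_sum_ge (hν : IsVal ν) {Q : Polynomial K} (hQm : Q.Monic)
    (hm : 1 ≤ Q.natDegree) {ι : Type*} {c : Γ} (s : Finset ι) (F : ι → Polynomial K) :
    (∀ i ∈ s, F i ≠ 0 → c ≤ truncVal ν Q (F i)) → (∑ i ∈ s, F i) ≠ 0 →
    c ≤ truncVal ν Q (∑ i ∈ s, F i) := by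
  induction s using Finset.induction_on with
  | empty => intro _ hs; simp at hs
  | @insert a s ha ih =>
    intro h hs
    rw [Finset.sum_insert ha] at hs ⊢
    by_cases hFa : F a = 0
    · rw [hFa, zero_add] at hs ⊢
      exact ih (fun i hi => h i (Finset.mem_insert_of_mem hi)) hs
    by_cases hS : ∑ i ∈ s, F i = 0
    · rw [hS, add_zero] at hs ⊢
      exact h a (Finset.mem_insert_self a s) hFa
    calc c ≤ min (truncVal ν Q (F a)) (truncVal ν Q (∑ i ∈ s, F i)) :=
          le_min (h a (Finset.mem_insert_self a s) hFa)
            (ih (fun i hi => h i (Finset.mem_insert_of_mem hi)) hS)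
      _ ≤ truncVal ν Q (F a + ∑ i ∈ s, F i) := truncVal_add hν hQm hm hs

private lemma truncVal_mul_Q (hν : IsVal ν) {Q : Polynomial K} (hQm : Q.Monic)
    (hm : 1 ≤ Q.natDegree) {f : Polynomial K} (hf : f ≠ 0) :
    truncVal ν Q f + ν Q ≤ truncVal ν Q (f * Q) := by
  have hfQ : f * Q ≠ 0 := mul_ne_zero hf hQm.ne_zero
  apply truncVal_ge hQm hm hfQ
  intro i hi
  have hdivQ : f * Q /ₘ Q = f := by
    have h := Polynomial.mul_divByMonic_cancel_left f hQm
    rwa [mul_comm] at h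
  cases i with
  | zero =>
    exfalso; apply hi
    rw [qCoeff_zero]
    exact (Polynomial.modByMonic_eq_zero_iff_dvd hQm).mpr (dvd_mul_left Q f)
  | succ i =>
    rw [qCoeff_succ hQm, hdivQ] at hi ⊢
    have h1 : ν (qCoeff Q f i * Q ^ (i + 1)) = ν (qCoeff Q f i * Q ^ i) + ν Q := by
      rw [pow_succ, ← mul_assoc,
        hν.map_mul _ Q (mul_ne_zero hi (pow_ne_zero _ hQm.ne_zero)) hQm.ne_zero]
    rw [h1]
    exact add_le_add_left (truncVal_le hQm hm hi) _

private lemma truncVal_mul_pow (hν : IsVal ν) {Q : Polynomial K} (hQm : Q.Monic)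
    (hm : 1 ≤ Q.natDegree) {f : Polynomial K} (hf : f ≠ 0) (k : ℕ) :
    truncVal ν Q f + (k : Γ) * ν Q ≤ truncVal ν Q (f * Q ^ k) := by
  induction k with
  | zero => simp
  | succ k ih =>
    have hre : f * Q ^ (k + 1) = f * Q ^ k * Q := by ring
    rw [hre]
    have h1 := truncVal_mul_Q hν hQm hm (mul_ne_zero hf (pow_ne_zero k hQm.ne_zero))
    have : ((k : ℕ) + 1 : Γ) * ν Q = (k : Γ) * ν Q + ν Q := by ring
    push_cast
    linarith

private lemma truncVal_small (hν : IsVal ν) {Q : Polynomial K} (hQm : Q.Monic)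
    (hm : 1 ≤ Q.natDegree) {f : Polynomial K} (hf : f ≠ 0)
    (hd : f.natDegree < Q.natDegree) : ν f ≤ truncVal ν Q f := by
  apply truncVal_ge hQm hm hf
  intro i hi
  cases i with
  | zero =>
    have hdd : f.degree < Q.degree := by
      calc f.degree ≤ (f.natDegree : WithBot ℕ) := Polynomial.degree_le_natDegree
        _ < Q.degree := by
            rw [Polynomial.degree_eq_natDegree hQm.ne_zero]; exact_mod_cast hd
    rw [qCoeff_zero, (Polynomial.modByMonic_eq_self_iff hQm).mpr hdd, pow_zero, mul_one]
  | succ i =>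
    exfalso; apply hi
    rw [qCoeff, (Polynomial.divByMonic_eq_zero_iff (hQm.pow _)).mpr ?_,
      Polynomial.zero_modByMonic]
    apply deg_lt_pow hQm
    have : Q.natDegree ≤ (i + 1) * Q.natDegree := Nat.le_mul_of_pos_left Q.natDegree (Nat.succ_pos i)
    omega

private lemma qCoeff_expand {Q : Polynomial K} (hQm : Q.Monic) (hm : 1 ≤ Q.natDegree) :
    ∀ (N : ℕ) (f : Polynomial K), f.natDegree ≤ N →
    f = ∑ i ∈ Finset.range (N + 1), qCoeff Q f i * Q ^ i := by
  intro N
  induction N with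
  | zero =>
    intro f hN
    have hdd : f.degree < Q.degree := by
      calc f.degree ≤ (f.natDegree : WithBot ℕ) := Polynomial.degree_le_natDegree
        _ < Q.degree := by
            rw [Polynomial.degree_eq_natDegree hQm.ne_zero]
            exact_mod_cast (show f.natDegree < Q.natDegree by omega)
    rw [Finset.sum_range_one, qCoeff_zero, (Polynomial.modByMonic_eq_self_iff hQm).mpr hdd,
      pow_zero, mul_one]
  | succ N ih =>
    intro f hN
    have hd : (f /ₘ Q).natDegree ≤ N := by
      rw [Polynomial.natDegree_divByMonic f hQm]; omega
    calc f = f %ₘ Q + Q * (f /ₘ Q) := (Polynomial.modByMonic_add_div f Q).symm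
      _ = f %ₘ Q + Q * ∑ i ∈ Finset.range (N + 1), qCoeff Q (f /ₘ Q) i * Q ^ i := by
          rw [← ih _ hd]
      _ = (∑ i ∈ Finset.range (N + 1), qCoeff Q f (i + 1) * Q ^ (i + 1))
            + qCoeff Q f 0 * Q ^ 0 := by
          rw [Finset.mul_sum, add_comm]
          congr 1
          · exact Finset.sum_congr rfl fun i _ => by rw [qCoeff_succ hQm]; ring
          · rw [qCoeff_zero, pow_zero, mul_one]
      _ = ∑ i ∈ Finset.range (N + 1 + 1), qCoeff Q f i * Q ^ i :=
          (Finset.sum_range_succ' (fun i => qCoeff Q f i * Q ^ i) (N + 1)).symm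

private lemma core_bad (hν : IsVal ν) {Q : Polynomial K} (hQ : IsKeyPol ν Q)
    {u v a r : Polynomial K} (hu : u ≠ 0) (hv : v ≠ 0)
    (hud : u.natDegree < Q.natDegree) (hvd : v.natDegree < Q.natDegree)
    (ha : a ≠ 0) (hr : r ≠ 0) (hadeg : a.natDegree < Q.natDegree)
    (hrdeg : r.natDegree < Q.natDegree)
    (hsplit : r + Q * a = u * v)
    (heq : ν (Q * a) = ν r) (hgt : ν (Q * a) < ν (u * v)) : False := by
  have hQ0 : Q ≠ 0 := hQ.1.ne_zero
  obtain ⟨b, hb1, hbQ, hbval⟩ := eps_exists hν hQ.1 hQ.2.1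
  have hνQa : ν (Q * a) = ν Q + ν a := hν.map_mul _ _ hQ0 ha
  have hx0 : Polynomial.hasseDeriv b Q * a ≠ 0 := mul_ne_zero hbQ ha
  have hxval : ν (Polynomial.hasseDeriv b Q * a) = ν (Q * a) - (b : Γ) * eps ν Q := by
    rw [hν.map_mul _ _ hbQ ha, hbval, hνQa]; ring
  have hmem : ((b, 0) : ℕ × ℕ) ∈ Finset.HasAntidiagonal.antidiagonal b := by simp
  have hQa_deriv : Polynomial.hasseDeriv b (Q * a)
      = Polynomial.hasseDeriv b Q * a
        + ∑ ij ∈ (Finset.HasAntidiagonal.antidiagonal b).erase (b, 0),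
            Polynomial.hasseDeriv ij.1 Q * Polynomial.hasseDeriv ij.2 a := by
    rw [Polynomial.hasseDeriv_mul]
    rw [← Finset.add_sum_erase _ _ hmem]
    simp [Polynomial.hasseDeriv_zero']
  have hA := v_sum_eq hν hx0 ((Finset.HasAntidiagonal.antidiagonal b).erase (b, 0))
      (fun ij => Polynomial.hasseDeriv ij.1 Q * Polynomial.hasseDeriv ij.2 a)
      (by
        intro ij hij hFne
        have hij2 : ij.1 + ij.2 = b := Finset.HasAntidiagonal.mem_antidiagonal.mp (Finset.mem_of_mem_erase hij)
        have hne1 : Polynomial.hasseDeriv ij.1 Q ≠ 0 := fun hc => hFne (by simp [hc])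
        have hne2 : Polynomial.hasseDeriv ij.2 a ≠ 0 := fun hc => hFne (by simp [hc])
        have hj1 : 1 ≤ ij.2 := by
          rcases Nat.eq_zero_or_pos ij.2 with h0 | h0
          · exact absurd (Prod.ext (show ij.1 = b by omega) h0) (Finset.ne_of_mem_erase hij)
          · exact h0
        have hd1 : ν Q - (ij.1 : Γ) * eps ν Q ≤ ν (Polynomial.hasseDeriv ij.1 Q) :=
          deriv_ge hν hne1
        have hd2 : ν a - (ij.2 : Γ) * eps ν Q < ν (Polynomial.hasseDeriv ij.2 a) :=
          small_deriv_lt hν hQ hadeg hj1 hne2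
        have hcast : (ij.1 : Γ) + (ij.2 : Γ) = (b : Γ) := by
          exact_mod_cast congrArg (Nat.cast : ℕ → Γ) hij2
        have hmul : (ij.1 : Γ) * eps ν Q + (ij.2 : Γ) * eps ν Q = (b : Γ) * eps ν Q := by
          rw [← add_mul, hcast]
        rw [hxval, hν.map_mul _ _ hne1 hne2, hνQa]
        linarith)
  rw [← hQa_deriv] at hA
  have hB := v_add_left (y := Polynomial.hasseDeriv b r) hν hA.1
      (fun hrne => by
        rw [hA.2, hxval]
        have hlt2 := small_deriv_lt hν hQ hrdeg hb1 hrne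
        linarith)
  have hcomm : Q * a + r = u * v := by rw [← hsplit]; ring
  have hD : Polynomial.hasseDeriv b (Q * a) + Polynomial.hasseDeriv b r
      = Polynomial.hasseDeriv b (u * v) := by
    rw [← map_add, hcomm]
  rw [hD] at hB
  have hBval : ν (Polynomial.hasseDeriv b (u * v)) = ν (Q * a) - (b : Γ) * eps ν Q := by
    rw [hB.2, hA.2, hxval]
  have hStepB : ν (u * v) - (b : Γ) * eps ν Q ≤ ν (Polynomial.hasseDeriv b (u * v)) := by
    rw [Polynomial.hasseDeriv_mul]
    refine v_sum_ge hν _ _ ?_ (by rw [← Polynomial.hasseDeriv_mul]; exact hB.1)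
    intro ij hij hne
    have hij2 : ij.1 + ij.2 = b := Finset.HasAntidiagonal.mem_antidiagonal.mp hij
    have hne1 : Polynomial.hasseDeriv ij.1 u ≠ 0 := fun hc => hne (by simp [hc])
    have hne2 : Polynomial.hasseDeriv ij.2 v ≠ 0 := fun hc => hne (by simp [hc])
    have hd1 := small_deriv_le hν hQ hud hne1
    have hd2 := small_deriv_le hν hQ hvd hne2
    have hcast : (ij.1 : Γ) + (ij.2 : Γ) = (b : Γ) := by
      exact_mod_cast congrArg (Nat.cast : ℕ → Γ) hij2
    have hmul : (ij.1 : Γ) * eps ν Q + (ij.2 : Γ) * eps ν Q = (b : Γ) * eps ν Q := by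
      rw [← add_mul, hcast]
    rw [hν.map_mul _ _ hne1 hne2, hν.map_mul u v hu hv]
    linarith
  linarith

private lemma core (hν : IsVal ν) {Q : Polynomial K} (hQ : IsKeyPol ν Q)
    {u v : Polynomial K} (hu : u ≠ 0) (hv : v ≠ 0)
    (hud : u.natDegree < Q.natDegree) (hvd : v.natDegree < Q.natDegree) :
    ν (u * v) ≤ truncVal ν Q (u * v) := by
  have hQm := hQ.1
  have hm := hQ.2.1
  have hQ0 : Q ≠ 0 := hQm.ne_zero
  have hh0 : u * v ≠ 0 := mul_ne_zero hu hv
  have hhdeg : (u * v).natDegree = u.natDegree + v.natDegree := Polynomial.natDegree_mul hu hv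
  have hsplit : u * v %ₘ Q + Q * (u * v /ₘ Q) = u * v := Polynomial.modByMonic_add_div _ Q
  have crux : (u * v %ₘ Q ≠ 0 → ν (u * v) ≤ ν (u * v %ₘ Q)) ∧
      (u * v /ₘ Q ≠ 0 → ν (u * v) ≤ ν (Q * (u * v /ₘ Q))) := by
    by_cases ha : u * v /ₘ Q = 0
    · refine ⟨fun _ => ?_, fun h' => absurd ha h'⟩
      rw [ha, mul_zero, add_zero] at hsplit
      rw [hsplit]
    · have hQa : Q * (u * v /ₘ Q) ≠ 0 := mul_ne_zero hQ0 ha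
      have hd := Polynomial.natDegree_divByMonic (u * v) hQm
      have hadeg : (u * v /ₘ Q).natDegree < Q.natDegree := by omega
      have hrdeg : (u * v %ₘ Q).natDegree < Q.natDegree := by
        by_cases hr0 : u * v %ₘ Q = 0
        · rw [hr0]; simp only [Polynomial.natDegree_zero]; omega
        · exact Polynomial.natDegree_lt_natDegree hr0 (Polynomial.degree_modByMonic_lt _ hQm)
      by_cases hr : u * v %ₘ Q = 0
      · refine ⟨fun h' => absurd hr h', fun _ => ?_⟩
        rw [hr, zero_add] at hsplit
        rw [hsplit]
      · rcases lt_trichotomy (ν (Q * (u * v /ₘ Q))) (ν (u * v %ₘ Q)) with hlt | heq | hlt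
        · have hres := v_add_left (y := u * v %ₘ Q) hν hQa (fun _ => hlt)
          have hre2 : Q * (u * v /ₘ Q) + u * v %ₘ Q = u * v := (add_comm _ _).trans hsplit
          rw [hre2] at hres
          exact ⟨fun _ => by rw [hres.2]; exact hlt.le, fun _ => le_of_eq hres.2⟩
        · rcases le_or_gt (ν (u * v)) (ν (Q * (u * v /ₘ Q))) with hle | hgt
          · exact ⟨fun _ => by rw [← heq]; exact hle, fun _ => hle⟩
          · exact (core_bad hν hQ hu hv hud hvd ha hr hadeg hrdeg hsplit heq hgt).elim
        · have hres := v_add_left (y := Q * (u * v /ₘ Q)) hν hr (fun _ => hlt)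
          rw [hsplit] at hres
          exact ⟨fun _ => le_of_eq hres.2, fun _ => by rw [hres.2]; exact hlt.le⟩
  apply truncVal_ge hQm hm hh0
  intro i hi
  match i with
  | 0 =>
    rw [qCoeff_zero] at hi ⊢
    rw [pow_zero, mul_one]
    exact crux.1 hi
  | 1 =>
    have hq1 : qCoeff Q (u * v) 1 = u * v /ₘ Q := by
      rw [qCoeff, pow_one]
      by_cases ha : u * v /ₘ Q = 0
      · rw [ha, Polynomial.zero_modByMonic]
      · apply (Polynomial.modByMonic_eq_self_iff hQm).mpr
        have hd := Polynomial.natDegree_divByMonic (u * v) hQm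
        calc (u * v /ₘ Q).degree ≤ ((u * v /ₘ Q).natDegree : WithBot ℕ) :=
              Polynomial.degree_le_natDegree
          _ < Q.degree := by
              rw [Polynomial.degree_eq_natDegree hQ0]
              exact_mod_cast (show (u * v /ₘ Q).natDegree < Q.natDegree by omega)
    rw [hq1] at hi ⊢
    rw [pow_one, mul_comm (u * v /ₘ Q) Q]
    exact crux.2 hi
  | (i + 2) =>
    exfalso; apply hi
    rw [qCoeff, (Polynomial.divByMonic_eq_zero_iff (hQm.pow _)).mpr ?_,
      Polynomial.zero_modByMonic]
    apply deg_lt_pow hQm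
    have h2 : 2 * Q.natDegree ≤ (i + 2) * Q.natDegree :=
      Nat.mul_le_mul (show 2 ≤ i + 2 by omega) (le_refl Q.natDegree)
    omega

private lemma truncVal_mul_small (hν : IsVal ν) {Q : Polynomial K} (hQ : IsKeyPol ν Q)
    {h w : Polynomial K} (hh : h ≠ 0) (hw : w ≠ 0) (hwd : w.natDegree < Q.natDegree) :
    truncVal ν Q h + ν w ≤ truncVal ν Q (h * w) := by
  have hQm := hQ.1
  have hm := hQ.2.1
  have hexp := qCoeff_expand hQm hm h.natDegree h le_rfl
  have hre : h * w = ∑ i ∈ Finset.range (h.natDegree + 1), qCoeff Q h i * w * Q ^ i := by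
    calc h * w = (∑ i ∈ Finset.range (h.natDegree + 1), qCoeff Q h i * Q ^ i) * w := by
          rw [← hexp]
      _ = _ := by rw [Finset.sum_mul]; exact Finset.sum_congr rfl fun i _ => by ring
  rw [hre]
  refine truncVal_sum_ge hν hQm hm _ _ ?_ (by rw [← hre]; exact mul_ne_zero hh hw)
  intro i _ hne
  have hci : qCoeff Q h i ≠ 0 := fun hc => hne (by simp [hc])
  have hciw : qCoeff Q h i * w ≠ 0 := mul_ne_zero hci hw
  have h1 := truncVal_mul_pow hν hQm hm hciw i
  have h2 : ν (qCoeff Q h i * w) ≤ truncVal ν Q (qCoeff Q h i * w) :=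
    core hν hQ hci hw (qCoeff_deg hQm hci) hwd
  have h3 : ν (qCoeff Q h i * w) = ν (qCoeff Q h i) + ν w := hν.map_mul _ _ hci hw
  have h4 : truncVal ν Q h ≤ ν (qCoeff Q h i * Q ^ i) := truncVal_le hQm hm hci
  have h5 : ν (qCoeff Q h i * Q ^ i) = ν (qCoeff Q h i) + (i : Γ) * ν Q := by
    rw [hν.map_mul _ _ hci (pow_ne_zero _ hQm.ne_zero), v_pow hν hQm.ne_zero]
  linarith

/-- For a key polynomial `Q` and `f` with `deg f < deg Q`,
`ν_Q(∂_b(f Q^n)) ≥ ν(f Q^n) - b ε(Q)` for every `b`. -/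
theorem truncVal_deriv_ge (ν : Polynomial K → Γ) (hν : IsVal ν)
    (Q : Polynomial K) (hQ : IsKeyPol ν Q) (f : Polynomial K) (hf : f ≠ 0)
    (hdeg : f.natDegree < Q.natDegree) (n b : ℕ) (hb : 1 ≤ b)
    (hder : Polynomial.hasseDeriv b (f * Q ^ n) ≠ 0) :
    ν (f * Q ^ n) - (b : Γ) * eps ν Q ≤
      truncVal ν Q (Polynomial.hasseDeriv b (f * Q ^ n)) := by
  have hQm := hQ.1
  have hm := hQ.2.1
  have main : ∀ (n b : ℕ), Polynomial.hasseDeriv b (f * Q ^ n) ≠ 0 →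
      ν (f * Q ^ n) - (b : Γ) * eps ν Q ≤
        truncVal ν Q (Polynomial.hasseDeriv b (f * Q ^ n)) := by
    intro n
    induction n with
    | zero =>
      intro b hd
      rw [pow_zero, mul_one] at hd ⊢
      rcases Nat.eq_zero_or_pos b with hb0 | hb0
      · subst hb0
        rw [Polynomial.hasseDeriv_zero']
        simpa using truncVal_small hν hQm hm hf hdeg
      · have h1 : (Polynomial.hasseDeriv b f).natDegree < Q.natDegree := by
          have := Polynomial.natDegree_hasseDeriv_le f b
          omega
        have h2 := truncVal_small hν hQm hm hd h1
        have h3 := small_deriv_le hν hQ hdeg hd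
        linarith
    | succ n ih =>
      intro b hd
      have hfQn : f * Q ^ n ≠ 0 := mul_ne_zero hf (pow_ne_zero _ hQm.ne_zero)
      have hre : f * Q ^ (n + 1) = f * Q ^ n * Q := by ring
      rw [hre] at hd ⊢
      have hval : ν (f * Q ^ n * Q) = ν (f * Q ^ n) + ν Q :=
        hν.map_mul _ _ hfQn hQm.ne_zero
      rw [Polynomial.hasseDeriv_mul] at hd ⊢
      refine truncVal_sum_ge hν hQm hm _ _ ?_ hd
      intro ij hij hne
      have hij2 : ij.1 + ij.2 = b := Finset.HasAntidiagonal.mem_antidiagonal.mp hij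
      have hne1 : Polynomial.hasseDeriv ij.1 (f * Q ^ n) ≠ 0 := fun hc => hne (by simp [hc])
      have hne2 : Polynomial.hasseDeriv ij.2 Q ≠ 0 := fun hc => hne (by simp [hc])
      have hcast : (ij.1 : Γ) + (ij.2 : Γ) = (b : Γ) := by
        exact_mod_cast congrArg (Nat.cast : ℕ → Γ) hij2
      have hmul : (ij.1 : Γ) * eps ν Q + (ij.2 : Γ) * eps ν Q = (b : Γ) * eps ν Q := by
        rw [← add_mul, hcast]
      have hih := ih ij.1 hne1
      rcases Nat.eq_zero_or_pos ij.2 with hj0 | hj0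
      · have hb' : ij.1 = b := by omega
        have hQ0' : Polynomial.hasseDeriv ij.2 Q = Q := by
          rw [hj0, Polynomial.hasseDeriv_zero']
        rw [hQ0']
        have htv := truncVal_mul_Q hν hQm hm hne1
        have hcast2 : (ij.1 : Γ) * eps ν Q = (b : Γ) * eps ν Q := by
          rw [show (ij.1 : Γ) = (b : Γ) from by exact_mod_cast hb']
        rw [hval]
        linarith
      · have hdw : (Polynomial.hasseDeriv ij.2 Q).natDegree < Q.natDegree := by
          have := Polynomial.natDegree_hasseDeriv_le Q ij.2
          omega
        have htv := truncVal_mul_small hν hQ hne1 hne2 hdw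
        have hdq := deriv_ge hν hne2
        rw [hval]
        linarith
  exact main n b hder
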